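/- arXiv:2305.16035 — 6 statements merged into one kernel-verified Lean document; each statement's English description precedes it below -/
import Mathlib

section
/- (Theorem 1, conclusion 1, per timestep) Fix d ≥ 1, μ : Fin d → ℝ, σx ≥ 0, and γ, σt ∈ ℝ with v := γ²σx² + σt² > 0. Let P = (Measure.pi fun i => gaussianReal (μ i) (σx²)) ⊗ (Measure.pi fun i => gaussianReal 0 1). Then the pushforward of P under (x, z) ↦ (fun i => −(γ * x i + σt * z i − γ * μ i)/v) equals Measure.pi (fun i => gaussianReal 0 (1/v)); i.e., the score of the diffused marginal evaluated at the diffused natural sample x_t = γ•x₀ + σt•z has independent coordinates distributed N(0, ζ²) with ζ² = 1/(γ²σx² + σt²). -/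
open MeasureTheory ProbabilityTheory Real
open scoped NNReal ENNReal

lemma gaussianPDFReal_conv (v1 v2 : ℝ≥0) (hv1 : v1 ≠ 0) (hv2 : v2 ≠ 0) (t : ℝ) :
    ∫ x, gaussianPDFReal 0 v1 x * gaussianPDFReal 0 v2 (t - x)
      = gaussianPDFReal 0 (v1 + v2) t := by
  have h1 : (0:ℝ) < v1 := lt_of_le_of_ne v1.coe_nonneg (by exact_mod_cast (Ne.symm hv1))
  have h2 : (0:ℝ) < v2 := lt_of_le_of_ne v2.coe_nonneg (by exact_mod_cast (Ne.symm hv2))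
  have h12 : (0:ℝ) < (v1:ℝ) + v2 := by linarith
  set b : ℝ := ((v1:ℝ) + v2) / (2 * v1 * v2) with hb
  have hbpos : 0 < b := by positivity
  set c : ℝ := (v1:ℝ) * t / ((v1:ℝ) + v2) with hc
  have key : ∀ x, gaussianPDFReal 0 v1 x * gaussianPDFReal 0 v2 (t - x)
      = ((√(2*π*v1))⁻¹ * (√(2*π*v2))⁻¹ * rexp (-t^2/(2*((v1:ℝ)+v2)))) * rexp (-b * (x - c)^2) := by
    intro x
    have hv1' : (v1:ℝ) ≠ 0 := h1.ne'
    have hv2' : (v2:ℝ) ≠ 0 := h2.ne'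
    have hv12 : (v1:ℝ) + v2 ≠ 0 := h12.ne'
    have e1 : rexp (-x^2/(2*(v1:ℝ))) * rexp (-(t-x)^2/(2*(v2:ℝ)))
        = rexp (-t^2/(2*((v1:ℝ)+v2))) * rexp (-b*(x-c)^2) := by
      rw [← Real.exp_add, ← Real.exp_add]
      congr 1
      rw [hb, hc]
      field_simp
      ring
    simp only [gaussianPDFReal, sub_zero]
    rw [mul_mul_mul_comm, e1]
    ring
  simp only [key]
  rw [integral_const_mul]
  have hint : ∫ x, rexp (-b * (x - c)^2) = √(π/b) := by
    rw [integral_sub_right_eq_self (fun y => rexp (-b * y^2)) c, integral_gaussian]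
  rw [hint, gaussianPDFReal]
  have harg : -(t - 0)^2 / (2 * ((v1 + v2 : ℝ≥0) : ℝ)) = -t^2/(2*((v1:ℝ)+v2)) := by
    push_cast; ring
  rw [harg]
  have hconst : (√(2*π*v1))⁻¹ * (√(2*π*v2))⁻¹ * √(π/b)
      = (√(2*π*((v1 + v2 : ℝ≥0) : ℝ)))⁻¹ := by
    rw [← Real.sqrt_inv, ← Real.sqrt_inv, ← Real.sqrt_mul (by positivity),
      ← Real.sqrt_mul (by positivity), ← Real.sqrt_inv]
    congr 1
    have hv1' : (v1:ℝ) ≠ 0 := h1.ne'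
    have hv2' : (v2:ℝ) ≠ 0 := h2.ne'
    have hv12 : (v1:ℝ) + v2 ≠ 0 := h12.ne'
    have hπ : π ≠ 0 := pi_ne_zero
    rw [hb]
    push_cast
    field_simp
  rw [← hconst]
  ring

lemma map_add_prod_withDensity (f g : ℝ → ℝ≥0∞) (hf : Measurable f) (hg : Measurable g) :
    Measure.map (fun p : ℝ × ℝ => p.1 + p.2)
        ((volume.withDensity f).prod (volume.withDensity g))
      = volume.withDensity (fun t => ∫⁻ x, f x * g (t - x)) := by
  ext s hs
  rw [Measure.map_apply measurable_add hs, withDensity_apply _ hs,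
    Measure.prod_apply (measurable_add hs)]
  have hslice : ∀ x : ℝ, (Prod.mk x ⁻¹' ((fun p : ℝ × ℝ => p.1 + p.2) ⁻¹' s))
      = (fun y => x + y) ⁻¹' s := by
    intro x; rfl
  have hinner : ∀ x : ℝ, (volume.withDensity g) ((fun y => x + y) ⁻¹' s)
      = ∫⁻ t in s, g (t - x) := by
    intro x
    rw [withDensity_apply _ ((measurable_const_add x) hs)]
    have hmp : MeasurePreserving (fun y : ℝ => x + y) volume volume :=
      measurePreserving_add_left volume x
    have hemb : MeasurableEmbedding (fun y : ℝ => x + y) :=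
      (MeasurableEquiv.addLeft x).measurableEmbedding
    have := hmp.setLIntegral_comp_preimage_emb hemb (fun t => g (t - x)) s
    simpa using this
  simp_rw [hslice, hinner]
  have hmeas2 : Measurable fun x : ℝ => ∫⁻ t in s, g (t - x) := by
    apply Measurable.lintegral_prod_right (f := fun x t => g (t - x))
    exact hg.comp (measurable_snd.sub measurable_fst)
  rw [lintegral_withDensity_eq_lintegral_mul _ hf hmeas2]
  calc ∫⁻ x, (f * fun x => ∫⁻ t in s, g (t - x)) x
      = ∫⁻ x, ∫⁻ t in s, f x * g (t - x) := by
        refine lintegral_congr fun x => ?_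
        simpa using (lintegral_const_mul (f x) (hg.comp (measurable_sub_const x))).symm
    _ = ∫⁻ t in s, ∫⁻ x, f x * g (t - x) := by
        apply lintegral_lintegral_swap
        exact ((hf.comp measurable_fst).mul
          (hg.comp (measurable_snd.sub measurable_fst))).aemeasurable

lemma gaussianReal_add_conv_zero (v1 v2 : ℝ≥0) :
    Measure.map (fun p : ℝ × ℝ => p.1 + p.2) ((gaussianReal 0 v1).prod (gaussianReal 0 v2))
      = gaussianReal 0 (v1 + v2) := by
  by_cases hv1 : v1 = 0
  · subst hv1
    rw [gaussianReal_zero_var, Measure.dirac_prod,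
      Measure.map_map measurable_add measurable_prodMk_left]
    simp [Function.comp_def]
  by_cases hv2 : v2 = 0
  · subst hv2
    rw [gaussianReal_zero_var, Measure.prod_dirac,
      Measure.map_map measurable_add (measurable_prodMk_right (α := ℝ) (β := ℝ))]
    simp [Function.comp_def]
  have hv12 : v1 + v2 ≠ 0 := by positivity
  rw [gaussianReal_of_var_ne_zero _ hv1, gaussianReal_of_var_ne_zero _ hv2,
    gaussianReal_of_var_ne_zero _ hv12,
    map_add_prod_withDensity _ _ (measurable_gaussianPDF 0 v1) (measurable_gaussianPDF 0 v2)]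
  congr 1
  ext t
  have hbdd : ∀ x, gaussianPDFReal 0 v1 x ≤ (√(2 * π * v1))⁻¹ := by
    intro x
    rw [gaussianPDFReal]
    have hle : rexp (-(x - 0) ^ 2 / (2 * (v1:ℝ))) ≤ 1 := by
      rw [Real.exp_le_one_iff, neg_div]
      have : (0:ℝ) ≤ (x - 0)^2 / (2 * v1) := by positivity
      linarith
    have h0 : (0:ℝ) ≤ (√(2 * π * v1))⁻¹ := by positivity
    calc (√(2 * π * v1))⁻¹ * rexp (-(x - 0) ^ 2 / (2 * (v1:ℝ)))
        ≤ (√(2 * π * v1))⁻¹ * 1 := mul_le_mul_of_nonneg_left hle h0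
      _ = _ := mul_one _
  have hint2 : Integrable (fun x => gaussianPDFReal 0 v2 (t - x)) := by
    have : (fun x => gaussianPDFReal 0 v2 (t - x)) = gaussianPDFReal t v2 := by
      ext x
      rw [gaussianPDFReal, gaussianPDFReal]
      congr 2
      ring
    rw [this]
    exact integrable_gaussianPDFReal t v2
  have hint : Integrable (fun x => gaussianPDFReal 0 v1 x * gaussianPDFReal 0 v2 (t - x)) := by
    have := hint2.bdd_mul (stronglyMeasurable_gaussianPDFReal 0 v1).aestronglyMeasurable
      (c := (√(2 * π * v1))⁻¹) (ae_of_all _ fun x => by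
        rw [Real.norm_eq_abs, abs_of_nonneg (gaussianPDFReal_nonneg 0 v1 x)]
        exact hbdd x)
    exact this
  calc ∫⁻ x, gaussianPDF 0 v1 x * gaussianPDF 0 v2 (t - x)
      = ∫⁻ x, ENNReal.ofReal (gaussianPDFReal 0 v1 x * gaussianPDFReal 0 v2 (t - x)) := by
        refine lintegral_congr fun x => ?_
        simp only [gaussianPDF_def]
        rw [ENNReal.ofReal_mul (gaussianPDFReal_nonneg 0 v1 x)]
    _ = ENNReal.ofReal (∫ x, gaussianPDFReal 0 v1 x * gaussianPDFReal 0 v2 (t - x)) := by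
        rw [← ofReal_integral_eq_lintegral_ofReal hint]
        exact ae_of_all _ fun x =>
          mul_nonneg (gaussianPDFReal_nonneg 0 v1 x) (gaussianPDFReal_nonneg 0 v2 _)
    _ = gaussianPDF 0 (v1 + v2) t := by
        rw [gaussianPDFReal_conv v1 v2 hv1 hv2 t, gaussianPDF_def]

lemma gaussianReal_add_conv (m1 m2 : ℝ) (v1 v2 : ℝ≥0) :
    Measure.map (fun p : ℝ × ℝ => p.1 + p.2) ((gaussianReal m1 v1).prod (gaussianReal m2 v2))
      = gaussianReal (m1 + m2) (v1 + v2) := by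
  have h1 : gaussianReal m1 v1 = (gaussianReal 0 v1).map (· + m1) := by
    rw [gaussianReal_map_add_const, zero_add]
  have h2 : gaussianReal m2 v2 = (gaussianReal 0 v2).map (· + m2) := by
    rw [gaussianReal_map_add_const, zero_add]
  rw [h1, h2,
    Measure.map_prod_map _ _ (measurable_add_const m1) (measurable_add_const m2),
    Measure.map_map measurable_add (by fun_prop)]
  have hcomp : ((fun p : ℝ × ℝ => p.1 + p.2) ∘ Prod.map (· + m1) (· + m2))
      = (fun y => y + (m1 + m2)) ∘ (fun p : ℝ × ℝ => p.1 + p.2) := by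
    ext p
    simp [Function.comp, Prod.map]
    ring
  rw [hcomp, ← Measure.map_map (measurable_add_const (m1 + m2)) measurable_add,
    gaussianReal_add_conv_zero, gaussianReal_map_add_const, zero_add]

lemma coord_map (m γ σt σx v : ℝ) (hσx : 0 ≤ σx) (hv : v = γ^2*σx^2 + σt^2) (hvpos : 0 < v) :
    Measure.map (fun p : ℝ × ℝ => -(γ * p.1 + σt * p.2 - γ * m) / v)
      ((gaussianReal m ((σx^2).toNNReal)).prod (gaussianReal 0 1))
      = gaussianReal 0 ((1/v).toNNReal) := by
  have hdecomp : (fun p : ℝ × ℝ => -(γ * p.1 + σt * p.2 - γ * m) / v)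
      = (fun y => (-(1/v)) * y + (γ*m/v)) ∘ ((fun p : ℝ × ℝ => p.1 + p.2)
          ∘ Prod.map (γ * ·) (σt * ·)) := by
    ext p
    simp only [Function.comp_apply, Prod.map_fst, Prod.map_snd]
    ring
  rw [hdecomp,
    ← Measure.map_map (f := (fun p : ℝ × ℝ => p.1 + p.2) ∘ Prod.map (γ * ·) (σt * ·))
      (g := fun y => (-(1/v)) * y + (γ*m/v)) (by fun_prop) (by fun_prop),
    ← Measure.map_map (f := Prod.map (γ * ·) (σt * ·))
      (g := fun p : ℝ × ℝ => p.1 + p.2) (by fun_prop) (by fun_prop),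
    ← Measure.map_prod_map _ _ (by fun_prop) (by fun_prop),
    gaussianReal_map_const_mul γ, gaussianReal_map_const_mul σt,
    gaussianReal_add_conv]
  have hsplit : (fun y : ℝ => (-(1/v)) * y + (γ*m/v))
      = (· + (γ*m/v)) ∘ ((-(1/v)) * ·) := rfl
  rw [hsplit, ← Measure.map_map (by fun_prop) (by fun_prop),
    gaussianReal_map_const_mul (-(1/v)), gaussianReal_map_add_const]
  have hM : (-(1/v)) * (γ * m + σt * 0) + γ*m/v = 0 := by ring
  rw [hM]
  congr 1
  apply NNReal.coe_injective
  push_cast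
  rw [Real.coe_toNNReal _ (sq_nonneg σx), Real.coe_toNNReal _ (by positivity : (0:ℝ) ≤ 1/v)]
  have h0 : γ^2*σx^2 + σt^2 ≠ 0 := by rw [← hv]; exact hvpos.ne'
  rw [hv]
  field_simp

lemma pi_map_coord {d : ℕ} (κ : Fin d → Measure (ℝ × ℝ)) [∀ i, IsProbabilityMeasure (κ i)]
    (g : Fin d → ℝ × ℝ → ℝ) (hg : ∀ i, Measurable (g i)) :
    Measure.map (fun q (i : Fin d) => g i (q i)) (Measure.pi κ)
      = Measure.pi (fun i => (κ i).map (g i)) := by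
  haveI : ∀ i, IsProbabilityMeasure ((κ i).map (g i)) :=
    fun i => Measure.isProbabilityMeasure_map (hg i).aemeasurable
  have hmeas : Measurable (fun (q : Fin d → ℝ × ℝ) (i : Fin d) => g i (q i)) :=
    measurable_pi_lambda (fun (q : Fin d → ℝ × ℝ) (i : Fin d) => g i (q i))
      fun i => (hg i).comp (measurable_pi_apply i)
  refine (Measure.pi_eq fun s hs => ?_).symm
  rw [Measure.map_apply hmeas (MeasurableSet.univ_pi hs)]
  have hpre : (fun q (i : Fin d) => g i (q i)) ⁻¹' Set.pi Set.univ s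
      = Set.pi Set.univ (fun i => g i ⁻¹' s i) := by
    ext q
    simp only [Set.mem_preimage, Set.mem_univ_pi]
  rw [hpre, Measure.pi_pi]
  exact Finset.prod_congr rfl fun i _ =>
    (Measure.map_apply (hg i) (hs i)).symm


/-- Theorem 1, conclusion 1, per timestep: the score of the diffused marginal evaluated
at the diffused natural sample `x_t = γ•x₀ + σt•z` has independent coordinates
distributed `N(0, ζ²)` with `ζ² = 1/(γ²σx² + σt²)`. -/
theorem score_of_diffused_natural_law (d : ℕ) (hd : 1 ≤ d) (μ : Fin d → ℝ) (σx : ℝ)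
    (hσx : 0 ≤ σx) (γ σt : ℝ) (v : ℝ) (hv : v = γ ^ 2 * σx ^ 2 + σt ^ 2) (hvpos : 0 < v) :
    Measure.map
      (fun p : (Fin d → ℝ) × (Fin d → ℝ) =>
        fun i => -(γ * p.1 i + σt * p.2 i - γ * μ i) / v)
      ((Measure.pi fun i => gaussianReal (μ i) ((σx ^ 2).toNNReal)).prod
        (Measure.pi fun _ => gaussianReal 0 1))
    = Measure.pi fun _ => gaussianReal 0 ((1 / v).toNNReal) := by

  have hT : Measurable (fun p : (Fin d → ℝ) × (Fin d → ℝ) =>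
      fun i => -(γ * p.1 i + σt * p.2 i - γ * μ i) / v) := by fun_prop
  have hprod : ((Measure.pi fun i => gaussianReal (μ i) ((σx ^ 2).toNNReal)).prod
        (Measure.pi fun _ => gaussianReal 0 1))
      = Measure.map (MeasurableEquiv.arrowProdEquivProdArrow ℝ ℝ (Fin d))
          (Measure.pi fun i =>
            (gaussianReal (μ i) ((σx ^ 2).toNNReal)).prod (gaussianReal 0 1)) :=
    (measurePreserving_arrowProdEquivProdArrow ℝ ℝ (Fin d) _ _).map_eq.symm
  rw [hprod, Measure.map_map hT
    (MeasurableEquiv.arrowProdEquivProdArrow ℝ ℝ (Fin d)).measurable]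
  have hcomp : ((fun p : (Fin d → ℝ) × (Fin d → ℝ) =>
        fun i => -(γ * p.1 i + σt * p.2 i - γ * μ i) / v)
      ∘ (MeasurableEquiv.arrowProdEquivProdArrow ℝ ℝ (Fin d)))
      = fun (q : Fin d → ℝ × ℝ) (i : Fin d) =>
          (fun p : ℝ × ℝ => -(γ * p.1 + σt * p.2 - γ * μ i) / v) (q i) := by
    funext q
    rfl
  rw [hcomp, pi_map_coord _ (fun i (p : ℝ × ℝ) => -(γ * p.1 + σt * p.2 - γ * μ i) / v) (fun i => by fun_prop)]
  exact congrArg Measure.pi (funext fun i => coord_map (μ i) γ σt σx v hσx hv hvpos)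
end

section
/- (Theorem 1, conclusion 2, per timestep; perturbation added before diffusion) Fix d ≥ 1, μ : Fin d → ℝ, σx ≥ 0, γ, σt ∈ ℝ with v := γ²σx² + σt² > 0, and ε : Fin d → ℝ. Let P = (Measure.pi fun i => gaussianReal (μ i) (σx²)) ⊗ (Measure.pi fun i => gaussianReal 0 1). Then the pushforward of P under (y, z) ↦ (fun i => −(γ * (y i + ε i) + σt * z i − γ * μ i)/v) equals Measure.pi (fun i => gaussianReal (−γ * ε i / v) (1/v)); i.e., if the adversarial sample ŷ₀ = y + ε is diffused to ŷ_t = γ•ŷ₀ + σt•z, the natural-marginal score at ŷ_t has independent coordinates with mean −γ·ε_i/v and variance 1/v. -/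
open MeasureTheory ProbabilityTheory

open Real in
open scoped NNReal ENNReal in
lemma pdf_mul_pdf (m₁ m₂ : ℝ) (s t : ℝ≥0) (hs : s ≠ 0) (ht : t ≠ 0) (y x : ℝ) :
    gaussianPDFReal m₁ s x * gaussianPDFReal m₂ t (y - x)
      = gaussianPDFReal (m₁ + m₂) (s + t) y *
        gaussianPDFReal (m₁ + s * (y - m₁ - m₂) / (s + t)) (s * t / (s + t)) x := by
  have hs' : (0:ℝ) < s := lt_of_le_of_ne s.coe_nonneg (by exact_mod_cast (Ne.symm hs))
  have ht' : (0:ℝ) < t := lt_of_le_of_ne t.coe_nonneg (by exact_mod_cast (Ne.symm ht))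
  have hst : (0:ℝ) < (s:ℝ) + t := by positivity
  simp only [gaussianPDFReal, NNReal.coe_add, NNReal.coe_div, NNReal.coe_mul]
  rw [mul_mul_mul_comm, ← Real.exp_add, mul_mul_mul_comm, ← Real.exp_add]
  congr 1
  · rw [← mul_inv, ← mul_inv, ← Real.sqrt_mul (by positivity), ← Real.sqrt_mul (by positivity)]
    congr 2
    field_simp
  · congr 1
    field_simp
    ring

open Real in
open scoped NNReal ENNReal in
lemma lintegral_pdf_mul (m₁ m₂ : ℝ) {s t : ℝ≥0} (hs : s ≠ 0) (ht : t ≠ 0) (y : ℝ) :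
    ∫⁻ x, gaussianPDF m₁ s x * gaussianPDF (m₂ + x) t y
      = gaussianPDF (m₁ + m₂) (s + t) y := by
  have hpt : ∀ x : ℝ, gaussianPDFReal (m₂ + x) t y = gaussianPDFReal m₂ t (y - x) := by
    intro x
    unfold gaussianPDFReal
    ring_nf
  have hw : s * t / (s + t) ≠ 0 := by positivity
  calc ∫⁻ x, gaussianPDF m₁ s x * gaussianPDF (m₂ + x) t y
      = ∫⁻ x, gaussianPDF (m₁ + m₂) (s + t) y *
          gaussianPDF (m₁ + s * (y - m₁ - m₂) / (s + t)) (s * t / (s + t)) x := by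
        congr 1 with x
        rw [gaussianPDF, gaussianPDF, gaussianPDF, gaussianPDF,
          ← ENNReal.ofReal_mul (gaussianPDFReal_nonneg _ _ _),
          ← ENNReal.ofReal_mul (gaussianPDFReal_nonneg _ _ _), hpt,
          pdf_mul_pdf m₁ m₂ s t hs ht y x]
    _ = gaussianPDF (m₁ + m₂) (s + t) y := by
        rw [lintegral_const_mul _ (measurable_gaussianPDF _ _),
          lintegral_gaussianPDF_eq_one _ hw, mul_one]

open scoped NNReal ENNReal in
lemma measurable_G {t : ℝ≥0} (m₂ : ℝ) {A : Set ℝ} (hA : MeasurableSet A) :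
    Measurable (fun p : ℝ × ℝ => gaussianPDF (m₂ + p.1) t p.2 * A.indicator 1 p.2) := by
  apply Measurable.mul
  · unfold gaussianPDF gaussianPDFReal
    apply Measurable.ennreal_ofReal
    fun_prop
  · exact (measurable_one.indicator hA).comp measurable_snd

open scoped NNReal ENNReal in
lemma gaussian_conv (m₁ m₂ : ℝ) (s t : ℝ≥0) :
    Measure.map (fun p : ℝ × ℝ => p.1 + p.2) ((gaussianReal m₁ s).prod (gaussianReal m₂ t))
      = gaussianReal (m₁ + m₂) (s + t) := by
  have hadd : Measurable (fun p : ℝ × ℝ => p.1 + p.2) := measurable_fst.add measurable_snd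
  by_cases hs : s = 0
  · subst hs
    rw [gaussianReal_zero_var, Measure.dirac_prod, Measure.map_map hadd measurable_prodMk_left]
    have : ((fun p : ℝ × ℝ => p.1 + p.2) ∘ Prod.mk m₁) = (m₁ + ·) := rfl
    rw [this, gaussianReal_map_const_add, add_comm m₂ m₁]
    norm_num
  by_cases ht : t = 0
  · subst ht
    rw [gaussianReal_zero_var, Measure.prod_dirac, Measure.map_map hadd (by fun_prop)]
    have : ((fun p : ℝ × ℝ => p.1 + p.2) ∘ (fun x => (x, m₂))) = (· + m₂) := rfl
    rw [this, gaussianReal_map_add_const]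
    norm_num
  -- main case
  have hst : s + t ≠ 0 := by positivity
  ext A hA
  have hind : ∀ x : ℝ, ∫⁻ y in A, gaussianPDF (m₂ + x) t y
      = ∫⁻ y, gaussianPDF (m₂ + x) t y * A.indicator 1 y := by
    intro x
    rw [← lintegral_indicator hA]
    congr 1 with y
    by_cases hy : y ∈ A <;> simp [hy]
  have h1 : ∀ x : ℝ, (gaussianReal m₂ t) (Prod.mk x ⁻¹' ((fun p : ℝ × ℝ => p.1 + p.2) ⁻¹' A))
      = ∫⁻ y, gaussianPDF (m₂ + x) t y * A.indicator 1 y := by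
    intro x
    have hpre : Prod.mk x ⁻¹' ((fun p : ℝ × ℝ => p.1 + p.2) ⁻¹' A) = (x + ·) ⁻¹' A := rfl
    rw [hpre, ← Measure.map_apply (measurable_const_add x) hA,
      gaussianReal_map_const_add, gaussianReal_apply _ ht, hind]
  rw [Measure.map_apply hadd hA, Measure.prod_apply (hadd hA)]
  simp_rw [h1]
  rw [gaussianReal_of_var_ne_zero _ hs,
    lintegral_withDensity_eq_lintegral_mul _ (measurable_gaussianPDF _ _)
      (Measurable.lintegral_prod_right' (measurable_G m₂ hA))]
  simp only [Pi.mul_apply]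
  have hGx : ∀ x : ℝ, Measurable fun y => gaussianPDF (m₂ + x) t y * A.indicator 1 y :=
    fun x => (measurable_gaussianPDF _ _).mul (measurable_one.indicator hA)
  calc ∫⁻ x, gaussianPDF m₁ s x * ∫⁻ y, gaussianPDF (m₂ + x) t y * A.indicator 1 y
      = ∫⁻ x, ∫⁻ y, gaussianPDF m₁ s x * (gaussianPDF (m₂ + x) t y * A.indicator 1 y) := by
        refine lintegral_congr fun x => ?_
        exact (lintegral_const_mul _ (hGx x)).symm
    _ = ∫⁻ y, ∫⁻ x, gaussianPDF m₁ s x * (gaussianPDF (m₂ + x) t y * A.indicator 1 y) := by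
        apply lintegral_lintegral_swap
        exact (((measurable_gaussianPDF m₁ s).comp measurable_fst).mul
          (measurable_G m₂ hA)).aemeasurable
    _ = ∫⁻ y, gaussianPDF (m₁ + m₂) (s + t) y * A.indicator 1 y := by
        refine lintegral_congr fun y => ?_
        have hm : Measurable fun x : ℝ => gaussianPDF m₁ s x * gaussianPDF (m₂ + x) t y := by
          refine (measurable_gaussianPDF _ _).mul ?_
          unfold gaussianPDF gaussianPDFReal
          exact Measurable.ennreal_ofReal (by fun_prop)
        simp_rw [← mul_assoc]
        rw [lintegral_mul_const _ hm, lintegral_pdf_mul m₁ m₂ hs ht y]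
    _ = gaussianReal (m₁ + m₂) (s + t) A := by
        rw [gaussianReal_apply _ hst, ← lintegral_indicator hA]
        congr 1 with y
        by_cases hy : y ∈ A <;> simp [hy]

open scoped NNReal ENNReal in
lemma score_coord (m c γ σt σx v : ℝ) (hσx : 0 ≤ σx) (hv : v = γ^2*σx^2+σt^2)
    (hvpos : 0 < v) :
    Measure.map (fun p : ℝ × ℝ => -(γ * (p.1 + c) + σt * p.2 - γ * m) / v)
      ((gaussianReal m ((σx^2).toNNReal)).prod (gaussianReal 0 1))
    = gaussianReal (-γ * c / v) ((1/v).toNNReal) := by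
  have hφ : (fun p : ℝ × ℝ => -(γ * (p.1 + c) + σt * p.2 - γ * m) / v)
      = (fun u => u + (γ * m - γ * c) / v) ∘ ((fun u => (-1/v) * u) ∘
        ((fun p : ℝ × ℝ => p.1 + p.2) ∘ (Prod.map (γ * ·) (σt * ·)))) := by
    funext p
    simp only [Function.comp_apply, Prod.map_apply, Prod.map_fst, Prod.map_snd]
    field_simp
    ring
  rw [hφ, ← Measure.map_map (by fun_prop) (by fun_prop),
    ← Measure.map_map (f := (fun p : ℝ × ℝ => p.1 + p.2) ∘ Prod.map (γ * ·) (σt * ·))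
      (by fun_prop) (by fun_prop),
    ← Measure.map_map (f := Prod.map (γ * ·) (σt * ·)) (by fun_prop) (by fun_prop),
    ← Measure.map_prod_map _ _ (by fun_prop) (by fun_prop),
    gaussianReal_map_const_mul γ, gaussianReal_map_const_mul σt,
    gaussian_conv, gaussianReal_map_const_mul, gaussianReal_map_add_const]
  congr 1
  · field_simp
    ring
  · ext
    push_cast
    rw [Real.coe_toNNReal _ (le_of_lt (by positivity : (0:ℝ) < 1/v)),
      Real.coe_toNNReal _ (sq_nonneg σx)]
    field_simp
    rw [hv]

/-- Theorem 1, conclusion 2, per timestep, perturbation added before diffusion: if the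
adversarial sample `ŷ₀ = y + ε` is diffused to `ŷ_t = γ•ŷ₀ + σt•z`, the natural-marginal
score at `ŷ_t` has independent coordinates with mean `−γ·ε_i/v` and variance `1/v`. -/
theorem score_of_diffused_adversarial_law (d : ℕ) (hd : 1 ≤ d) (μ : Fin d → ℝ) (σx : ℝ)
    (hσx : 0 ≤ σx) (γ σt : ℝ) (v : ℝ) (hv : v = γ ^ 2 * σx ^ 2 + σt ^ 2) (hvpos : 0 < v)
    (ε : Fin d → ℝ) :
    Measure.map
      (fun p : (Fin d → ℝ) × (Fin d → ℝ) =>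
        fun i => -(γ * (p.1 i + ε i) + σt * p.2 i - γ * μ i) / v)
      ((Measure.pi fun i => gaussianReal (μ i) ((σx ^ 2).toNNReal)).prod
        (Measure.pi fun _ => gaussianReal 0 1))
    = Measure.pi fun i => gaussianReal (-γ * ε i / v) ((1 / v).toNNReal) := by
  have hmp : ∀ i : Fin d,
      MeasurePreserving (fun q : ℝ × ℝ => -(γ * (q.1 + ε i) + σt * q.2 - γ * μ i) / v)
        ((gaussianReal (μ i) ((σx ^ 2).toNNReal)).prod (gaussianReal 0 1))
        (gaussianReal (-γ * ε i / v) ((1 / v).toNNReal)) :=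
    fun i => ⟨by fun_prop, score_coord (μ i) (ε i) γ σt σx v hσx hv hvpos⟩
  have h1 := (measurePreserving_arrowProdEquivProdArrow ℝ ℝ (Fin d)
      (fun i => gaussianReal (μ i) ((σx ^ 2).toNNReal)) (fun _ => gaussianReal 0 1)).map_eq
  have h2 := (measurePreserving_pi _ _ hmp).map_eq
  rw [← h1, Measure.map_map (by fun_prop)
    (MeasurableEquiv.arrowProdEquivProdArrow ℝ ℝ (Fin d)).measurable]
  exact h2
end

section
/- (Theorem 1, conclusion 3, natural pair, per timestep) Fix d ≥ 1, μ : Fin d → ℝ, σx ≥ 0, γ, σt ∈ ℝ with v := γ²σx² + σt² > 0. Let P be the fourfold product measure under which X₀, Y₀ are independent with law Measure.pi (fun i => gaussianReal (μ i) (σx²)) and Z, Z′ are independent with law Measure.pi (fun i => gaussianReal 0 1), all four mutually independent. Then the law of the difference of perturbation scores, (fun i => −(γ * X₀ i + σt * Z i − γ * μ i)/v + (γ * Y₀ i + σt * Z′ i − γ * μ i)/v), is Measure.pi (fun i => gaussianReal 0 (2/v)); i.e., for two independent natural samples the difference of their per-timestep perturbation scores has independent coordinates distributed N(0, 2ζ²)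 with ζ² = 1/v. -/
open MeasureTheory ProbabilityTheory

section ScoreAux

open Real
open scoped NNReal ENNReal

namespace ScoreAux

/-- Pointwise factorization of a product of two Gaussian densities (completing the square). -/
lemma gauss_key (m₁ m₂ : ℝ) (v₁ v₂ : ℝ≥0) (h₁ : v₁ ≠ 0) (h₂ : v₂ ≠ 0) (z x : ℝ) :
    gaussianPDFReal m₁ v₁ x * gaussianPDFReal m₂ v₂ (z - x)
      = gaussianPDFReal (m₁ + m₂) (v₁ + v₂) z *
        ((Real.sqrt (π / (((v₁ : ℝ) + v₂) / (2 * v₁ * v₂))))⁻¹ *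
          Real.exp (-(((v₁ : ℝ) + v₂) / (2 * v₁ * v₂)) *
            (x - ((v₂ : ℝ) * m₁ + v₁ * (z - m₂)) / ((v₁ : ℝ) + v₂)) ^ 2)) := by
  have hv₁ : (0 : ℝ) < v₁ := lt_of_le_of_ne (v₁.coe_nonneg) (by exact_mod_cast (Ne.symm h₁))
  have hv₂ : (0 : ℝ) < v₂ := lt_of_le_of_ne (v₂.coe_nonneg) (by exact_mod_cast (Ne.symm h₂))
  have hv₁₂ : (0 : ℝ) < (v₁ : ℝ) + v₂ := by positivity
  simp only [gaussianPDFReal, NNReal.coe_add]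
  rw [show (√(2 * π * v₁))⁻¹ * rexp (-(x - m₁) ^ 2 / (2 * v₁)) *
      ((√(2 * π * v₂))⁻¹ * rexp (-(z - x - m₂) ^ 2 / (2 * v₂)))
    = ((√(2 * π * v₁)) * (√(2 * π * v₂)))⁻¹ *
      (rexp (-(x - m₁) ^ 2 / (2 * v₁)) * rexp (-(z - x - m₂) ^ 2 / (2 * v₂))) by
      rw [mul_inv]; ring]
  rw [← Real.exp_add]
  rw [show (√(2 * π * ((v₁ : ℝ) + v₂)))⁻¹ * rexp (-(z - (m₁ + m₂)) ^ 2 / (2 * ((v₁:ℝ) + v₂))) *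
      ((√(π / (((v₁ : ℝ) + v₂) / (2 * v₁ * v₂))))⁻¹ *
        rexp (-(((v₁ : ℝ) + v₂) / (2 * v₁ * v₂)) *
          (x - ((v₂ : ℝ) * m₁ + v₁ * (z - m₂)) / ((v₁ : ℝ) + v₂)) ^ 2))
    = ((√(2 * π * ((v₁ : ℝ) + v₂))) * (√(π / (((v₁ : ℝ) + v₂) / (2 * v₁ * v₂)))))⁻¹ *
      (rexp (-(z - (m₁ + m₂)) ^ 2 / (2 * ((v₁:ℝ) + v₂))) *
        rexp (-(((v₁ : ℝ) + v₂) / (2 * v₁ * v₂)) *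
          (x - ((v₂ : ℝ) * m₁ + v₁ * (z - m₂)) / ((v₁ : ℝ) + v₂)) ^ 2)) by
      rw [mul_inv]; ring]
  rw [← Real.exp_add]
  congr 1
  · rw [← Real.sqrt_mul (by positivity), ← Real.sqrt_mul (by positivity)]
    congr 2
    field_simp
  · congr 1
    field_simp
    ring

lemma gauss_conv_integrable (m₁ m₂ : ℝ) (v₁ v₂ : ℝ≥0) (h₁ : v₁ ≠ 0) (h₂ : v₂ ≠ 0) (z : ℝ) :
    Integrable (fun x => gaussianPDFReal m₁ v₁ x * gaussianPDFReal m₂ v₂ (z - x)) := by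
  have hv₁ : (0 : ℝ) < v₁ := lt_of_le_of_ne (v₁.coe_nonneg) (by exact_mod_cast (Ne.symm h₁))
  have hv₂ : (0 : ℝ) < v₂ := lt_of_le_of_ne (v₂.coe_nonneg) (by exact_mod_cast (Ne.symm h₂))
  have hb : (0 : ℝ) < ((v₁ : ℝ) + v₂) / (2 * v₁ * v₂) := by positivity
  simp_rw [gauss_key m₁ m₂ v₁ v₂ h₁ h₂ z]
  exact (((integrable_exp_neg_mul_sq hb).comp_sub_right
    (((v₂ : ℝ) * m₁ + v₁ * (z - m₂)) / ((v₁ : ℝ) + v₂))).const_mul _).const_mul _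

/-- The convolution identity for Gaussian densities. -/
lemma gauss_conv_pdf (m₁ m₂ : ℝ) (v₁ v₂ : ℝ≥0) (h₁ : v₁ ≠ 0) (h₂ : v₂ ≠ 0) (z : ℝ) :
    ∫ x, gaussianPDFReal m₁ v₁ x * gaussianPDFReal m₂ v₂ (z - x)
      = gaussianPDFReal (m₁ + m₂) (v₁ + v₂) z := by
  have hv₁ : (0 : ℝ) < v₁ := lt_of_le_of_ne (v₁.coe_nonneg) (by exact_mod_cast (Ne.symm h₁))
  have hv₂ : (0 : ℝ) < v₂ := lt_of_le_of_ne (v₂.coe_nonneg) (by exact_mod_cast (Ne.symm h₂))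
  have hb : (0 : ℝ) < ((v₁ : ℝ) + v₂) / (2 * v₁ * v₂) := by positivity
  simp_rw [gauss_key m₁ m₂ v₁ v₂ h₁ h₂ z]
  rw [integral_const_mul, integral_const_mul,
    integral_sub_right_eq_self
      (fun x => rexp (-(((v₁ : ℝ) + v₂) / (2 * v₁ * v₂)) * x ^ 2))
      (((v₂ : ℝ) * m₁ + v₁ * (z - m₂)) / ((v₁ : ℝ) + v₂)),
    integral_gaussian, inv_mul_cancel₀, mul_one]
  exact Real.sqrt_ne_zero'.mpr (by positivity)

/-- The sum of two independent Gaussian random variables is Gaussian. -/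
lemma gaussianReal_conv (m₁ m₂ : ℝ) (v₁ v₂ : ℝ≥0) :
    Measure.map (fun p : ℝ × ℝ => p.1 + p.2)
      ((gaussianReal m₁ v₁).prod (gaussianReal m₂ v₂)) = gaussianReal (m₁ + m₂) (v₁ + v₂) := by
  by_cases h₁ : v₁ = 0
  · subst h₁
    rw [gaussianReal_zero_var, Measure.dirac_prod, Measure.map_map (by fun_prop) (by fun_prop)]
    have : ((fun p : ℝ × ℝ => p.1 + p.2) ∘ Prod.mk m₁) = fun y => m₁ + y := rfl
    rw [this, gaussianReal_map_const_add, add_comm m₂ m₁, zero_add]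
  by_cases h₂ : v₂ = 0
  · subst h₂
    rw [gaussianReal_zero_var, Measure.prod_dirac, Measure.map_map (by fun_prop) (by fun_prop)]
    have : ((fun p : ℝ × ℝ => p.1 + p.2) ∘ fun x => (x, m₂)) = fun x => x + m₂ := rfl
    rw [this, gaussianReal_map_add_const, add_zero]
  have h₁₂ : v₁ + v₂ ≠ 0 := by simp [h₁]
  have hmble : Measurable fun p : ℝ × ℝ => p.1 + p.2 := by fun_prop
  ext s hs
  rw [Measure.map_apply hmble hs, Measure.prod_apply (hmble hs)]
  have step1 : ∀ x : ℝ, gaussianReal m₂ v₂ (Prod.mk x ⁻¹' ((fun p : ℝ × ℝ => p.1 + p.2) ⁻¹' s))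
      = ∫⁻ z in s, gaussianPDF (m₂ + x) v₂ z := by
    intro x
    have : Prod.mk x ⁻¹' ((fun p : ℝ × ℝ => p.1 + p.2) ⁻¹' s) = (fun y => x + y) ⁻¹' s := rfl
    rw [this, ← Measure.map_apply (by fun_prop) hs, gaussianReal_map_const_add,
      gaussianReal_apply _ h₂]
  simp_rw [step1]
  rw [gaussianReal_of_var_ne_zero _ h₁,
    lintegral_withDensity_eq_lintegral_mul _ (measurable_gaussianPDF _ _)]
  swap
  · apply Measurable.lintegral_prod_right (f := fun x z => gaussianPDF (m₂ + x) v₂ z)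
    unfold gaussianPDF gaussianPDFReal
    fun_prop
  have step2 : ∀ x : ℝ, gaussianPDF m₁ v₁ x * ∫⁻ z in s, gaussianPDF (m₂ + x) v₂ z
      = ∫⁻ z in s, gaussianPDF m₁ v₁ x * gaussianPDF (m₂ + x) v₂ z := by
    intro x
    rw [lintegral_const_mul _ (measurable_gaussianPDF _ _)]
  simp only [Pi.mul_apply]
  simp_rw [step2]
  rw [lintegral_lintegral_swap]
  swap
  · apply Measurable.aemeasurable
    unfold gaussianPDF gaussianPDFReal
    fun_prop
  have step3 : ∀ z : ℝ, ∫⁻ x, gaussianPDF m₁ v₁ x * gaussianPDF (m₂ + x) v₂ z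
      = gaussianPDF (m₁ + m₂) (v₁ + v₂) z := by
    intro z
    have he : ∀ x : ℝ, gaussianPDF m₁ v₁ x * gaussianPDF (m₂ + x) v₂ z
        = ENNReal.ofReal (gaussianPDFReal m₁ v₁ x * gaussianPDFReal m₂ v₂ (z - x)) := by
      intro x
      rw [gaussianPDFReal_sub, gaussianPDF, gaussianPDF, ← ENNReal.ofReal_mul
        (gaussianPDFReal_nonneg _ _ _)]
    simp_rw [he]
    rw [← ofReal_integral_eq_lintegral_ofReal (gauss_conv_integrable m₁ m₂ v₁ v₂ h₁ h₂ z)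
      (ae_of_all _ fun x => mul_nonneg (gaussianPDFReal_nonneg _ _ _)
        (gaussianPDFReal_nonneg _ _ _)),
      gauss_conv_pdf m₁ m₂ v₁ v₂ h₁ h₂ z, gaussianPDF]
  simp_rw [step3]
  rw [← gaussianReal_apply _ h₁₂]

/-- A linear combination of two independent Gaussians is Gaussian. -/
lemma gaussianReal_map_lin (a c m₁ m₂ : ℝ) (v₁ v₂ : ℝ≥0) :
    Measure.map (fun p : ℝ × ℝ => a * p.1 + c * p.2)
      ((gaussianReal m₁ v₁).prod (gaussianReal m₂ v₂))
    = gaussianReal (a * m₁ + c * m₂)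
        (NNReal.mk (a ^ 2) (sq_nonneg a) * v₁ + NNReal.mk (c ^ 2) (sq_nonneg c) * v₂) := by
  have h : (fun p : ℝ × ℝ => a * p.1 + c * p.2)
      = (fun p : ℝ × ℝ => p.1 + p.2) ∘ Prod.map (a * ·) (c * ·) := rfl
  rw [h, ← Measure.map_map (by fun_prop) (by fun_prop),
    ← Measure.map_prod_map _ _ (by fun_prop) (by fun_prop),
    gaussianReal_map_const_mul, gaussianReal_map_const_mul, gaussianReal_conv]

/-- The per-coordinate law of the score difference. -/
lemma percoord (mi σx γ σt v : ℝ) (hv : v = γ ^ 2 * σx ^ 2 + σt ^ 2)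
    (hvpos : 0 < v) :
    Measure.map (fun q : (ℝ × ℝ) × (ℝ × ℝ) =>
        -(γ * q.1.1 + σt * q.2.1 - γ * mi) / v + (γ * q.1.2 + σt * q.2.2 - γ * mi) / v)
      (((gaussianReal mi ((σx ^ 2).toNNReal)).prod (gaussianReal mi ((σx ^ 2).toNNReal))).prod
        ((gaussianReal 0 1).prod (gaussianReal 0 1)))
    = gaussianReal 0 ((2 / v).toNNReal) := by
  have hfun : (fun q : (ℝ × ℝ) × (ℝ × ℝ) =>
        -(γ * q.1.1 + σt * q.2.1 - γ * mi) / v + (γ * q.1.2 + σt * q.2.2 - γ * mi) / v)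
      = (fun p : ℝ × ℝ => p.1 + p.2) ∘
        Prod.map (fun p : ℝ × ℝ => (-γ / v) * p.1 + (γ / v) * p.2)
                 (fun p : ℝ × ℝ => (-σt / v) * p.1 + (σt / v) * p.2) := by
    funext q
    simp only [Function.comp_apply, Prod.map_fst, Prod.map_snd]
    field_simp
    ring
  rw [hfun, ← Measure.map_map (by fun_prop) (by fun_prop),
    ← Measure.map_prod_map _ _ (by fun_prop) (by fun_prop),
    gaussianReal_map_lin, gaussianReal_map_lin, gaussianReal_conv]
  congr 1
  · ring
  · ext
    push_cast
    rw [Real.coe_toNNReal _ (sq_nonneg σx), Real.coe_toNNReal _ (by positivity)]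
    field_simp
    rw [hv]
    ring

end ScoreAux

end ScoreAux

open ScoreAux in
/-- Theorem 1, conclusion 3, natural pair, per timestep: for two independent natural
samples `X₀, Y₀` with independent noises `Z, Z′`, the difference of their per-timestep
perturbation scores has independent coordinates distributed `N(0, 2ζ²)`
with `ζ² = 1/v`, `v = γ²σx² + σt²`. -/
theorem score_difference_natural_pair_law (d : ℕ) (hd : 1 ≤ d) (μ : Fin d → ℝ) (σx : ℝ)
    (hσx : 0 ≤ σx) (γ σt : ℝ) (v : ℝ) (hv : v = γ ^ 2 * σx ^ 2 + σt ^ 2) (hvpos : 0 < v) :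
    Measure.map
      (fun p : ((Fin d → ℝ) × (Fin d → ℝ)) × ((Fin d → ℝ) × (Fin d → ℝ)) =>
        fun i => -(γ * p.1.1 i + σt * p.2.1 i - γ * μ i) / v
          + (γ * p.1.2 i + σt * p.2.2 i - γ * μ i) / v)
      (((Measure.pi fun i => gaussianReal (μ i) ((σx ^ 2).toNNReal)).prod
          (Measure.pi fun i => gaussianReal (μ i) ((σx ^ 2).toNNReal))).prod
        ((Measure.pi fun _ => gaussianReal 0 1).prod
          (Measure.pi fun _ => gaussianReal 0 1)))
    = Measure.pi fun _ => gaussianReal 0 ((2 / v).toNNReal) := by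
  set κ : Fin d → Measure ((ℝ × ℝ) × (ℝ × ℝ)) := fun i =>
    ((gaussianReal (μ i) ((σx ^ 2).toNNReal)).prod (gaussianReal (μ i) ((σx ^ 2).toNNReal))).prod
      ((gaussianReal 0 1).prod (gaussianReal 0 1)) with hκ
  have mp1 := measurePreserving_arrowProdEquivProdArrow (ℝ × ℝ) (ℝ × ℝ) (Fin d)
    (fun i => (gaussianReal (μ i) ((σx ^ 2).toNNReal)).prod
      (gaussianReal (μ i) ((σx ^ 2).toNNReal)))
    (fun _ => (gaussianReal 0 1).prod (gaussianReal 0 1))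
  have mpA := measurePreserving_arrowProdEquivProdArrow ℝ ℝ (Fin d)
    (fun i => gaussianReal (μ i) ((σx ^ 2).toNNReal))
    (fun i => gaussianReal (μ i) ((σx ^ 2).toNNReal))
  have mpB := measurePreserving_arrowProdEquivProdArrow ℝ ℝ (Fin d)
    (fun _ => gaussianReal 0 1) (fun _ => gaussianReal 0 1)
  have mp2 := (mpA.prod mpB).comp mp1
  rw [← mp2.map_eq, Measure.map_map (by fun_prop) (Measurable.prodMap mpA.measurable mpB.measurable
    |>.comp mp1.measurable)]
  have hcomp : ((fun p : ((Fin d → ℝ) × (Fin d → ℝ)) × ((Fin d → ℝ) × (Fin d → ℝ)) =>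
        fun i => -(γ * p.1.1 i + σt * p.2.1 i - γ * μ i) / v
          + (γ * p.1.2 i + σt * p.2.2 i - γ * μ i) / v) ∘
      (Prod.map (MeasurableEquiv.arrowProdEquivProdArrow ℝ ℝ (Fin d))
          (MeasurableEquiv.arrowProdEquivProdArrow ℝ ℝ (Fin d)) ∘
        MeasurableEquiv.arrowProdEquivProdArrow (ℝ × ℝ) (ℝ × ℝ) (Fin d)))
    = fun (q : Fin d → (ℝ × ℝ) × (ℝ × ℝ)) (i : Fin d) =>
        -(γ * (q i).1.1 + σt * (q i).2.1 - γ * μ i) / v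
          + (γ * (q i).1.2 + σt * (q i).2.2 - γ * μ i) / v := rfl
  rw [hcomp]
  exact (measurePreserving_pi κ (fun _ => gaussianReal 0 ((2 / v).toNNReal))
    (fun i => ⟨by fun_prop, percoord (μ i) σx γ σt v hv hvpos⟩)).map_eq
end

section
/- (Theorem 1, conclusion 3, natural–adversarial pair, per timestep) Fix d ≥ 1, μ : Fin d → ℝ, σx ≥ 0, γ, σt ∈ ℝ with v := γ²σx² + σt² > 0, and ε : Fin d → ℝ. Let P be the fourfold product measure under which X₀, Y₀ are independent with law Measure.pi (fun i => gaussianReal (μ i) (σx²)) and Z, Z′ are independent with law Measure.pi (fun i => gaussianReal 0 1), all four mutually independent. Then the law of (fun i => −(γ * X₀ i + σt * Z i − γ * μ i)/v + (γ * Y₀ i + σt * Z′ i + ε i − γ * μ i)/v) is Measure.pi (fun i => gaussianReal (ε i / v) (2/v)); i.e., the difference between the perturbation score of a natural sample and that of an independent ε-shifted adversarial sample has independent coordinates distributed N(ε_i/v, 2ζ²) with ζ² = 1/v. -/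
set_option maxHeartbeats 1000000

open MeasureTheory ProbabilityTheory

namespace ScoreDiffAux

open Real
open scoped ENNReal NNReal

/-- Convolution identity for Gaussian densities. -/
lemma gaussianPDFReal_conv (m1 m2 : ℝ) (v1 v2 : ℝ≥0) (h1 : v1 ≠ 0) (h2 : v2 ≠ 0) (w x : ℝ) :
    gaussianPDFReal m1 v1 x * gaussianPDFReal m2 v2 (w - x)
      = gaussianPDFReal (m1 + m2) (v1 + v2) w
        * gaussianPDFReal ((v2 * m1 + v1 * (w - m2)) / (v1 + v2)) (v1 * v2 / (v1 + v2)) x := by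
  have ha : (0:ℝ) < v1 := by positivity
  have hb : (0:ℝ) < v2 := by positivity
  simp only [gaussianPDFReal, NNReal.coe_add, NNReal.coe_div, NNReal.coe_mul]
  set a := (v1:ℝ)
  set b := (v2:ℝ)
  have ha' : a ≠ 0 := ne_of_gt ha
  have hb' : b ≠ 0 := ne_of_gt hb
  have hab : a + b ≠ 0 := by positivity
  have hc : (√(2 * π * a))⁻¹ * (√(2 * π * b))⁻¹
      = (√(2 * π * (a + b)))⁻¹ * (√(2 * π * (a * b / (a + b))))⁻¹ := by
    rw [← mul_inv, ← mul_inv, ← Real.sqrt_mul (by positivity), ← Real.sqrt_mul (by positivity)]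
    congr 2
    field_simp
  have he : rexp (-(x - m1) ^ 2 / (2 * a)) * rexp (-(w - x - m2) ^ 2 / (2 * b))
      = rexp (-(w - (m1 + m2)) ^ 2 / (2 * (a + b)))
        * rexp (-(x - (b * m1 + a * (w - m2)) / (a + b)) ^ 2 / (2 * (a * b / (a + b)))) := by
    rw [← Real.exp_add, ← Real.exp_add]
    congr 1
    field_simp
    ring
  calc (√(2 * π * a))⁻¹ * rexp (-(x - m1) ^ 2 / (2 * a))
        * ((√(2 * π * b))⁻¹ * rexp (-(w - x - m2) ^ 2 / (2 * b)))
      = ((√(2 * π * a))⁻¹ * (√(2 * π * b))⁻¹)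
        * (rexp (-(x - m1) ^ 2 / (2 * a)) * rexp (-(w - x - m2) ^ 2 / (2 * b))) := by ring
    _ = _ := by rw [hc, he]; ring

/-- The sum of two independent Gaussian random variables is Gaussian. -/
lemma gaussianReal_conv (m1 m2 : ℝ) (v1 v2 : ℝ≥0) :
    Measure.map (fun p : ℝ × ℝ => p.1 + p.2)
        ((gaussianReal m1 v1).prod (gaussianReal m2 v2))
      = gaussianReal (m1 + m2) (v1 + v2) := by
  by_cases h1 : v1 = 0
  · subst h1
    rw [gaussianReal_zero_var, Measure.dirac_prod, Measure.map_map measurable_add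
      measurable_prodMk_left, zero_add]
    have hfun : ((fun p : ℝ × ℝ => p.1 + p.2) ∘ Prod.mk m1) = fun y => m1 + y := rfl
    rw [hfun, gaussianReal_map_const_add, add_comm m2 m1]
  by_cases h2 : v2 = 0
  · subst h2
    rw [gaussianReal_zero_var, Measure.prod_dirac, Measure.map_map measurable_add
      measurable_prodMk_right, add_zero]
    have hfun : ((fun p : ℝ × ℝ => p.1 + p.2) ∘ fun x => (x, m2)) = fun y => y + m2 := rfl
    rw [hfun, gaussianReal_map_add_const]
  -- main case
  have h12 : v1 + v2 ≠ 0 := by simp [h1]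
  have hmeas2 : Measurable fun q : ℝ × ℝ => gaussianPDF m2 v2 (q.2 - q.1) :=
    (measurable_gaussianPDF m2 v2).comp (measurable_snd.sub measurable_fst)
  rw [gaussianReal_of_var_ne_zero _ h1, gaussianReal_of_var_ne_zero _ h2,
    gaussianReal_of_var_ne_zero _ h12]
  ext s hs
  rw [Measure.map_apply measurable_add hs, Measure.prod_apply (measurable_add hs),
    withDensity_apply _ hs]
  have step1 : ∀ x : ℝ, (volume.withDensity (gaussianPDF m2 v2))
        (Prod.mk x ⁻¹' ((fun p : ℝ × ℝ => p.1 + p.2) ⁻¹' s))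
      = ∫⁻ w in s, gaussianPDF m2 v2 (w - x) := by
    intro x
    have hpre : Prod.mk x ⁻¹' ((fun p : ℝ × ℝ => p.1 + p.2) ⁻¹' s) = (fun y => x + y) ⁻¹' s := by
      ext y; simp
    rw [hpre, withDensity_apply _ ((measurable_const_add x) hs)]
    have := MeasureTheory.setLIntegral_map (μ := (volume : Measure ℝ)) hs
      ((measurable_gaussianPDF m2 v2).comp (measurable_sub_const x)) (measurable_const_add x)
    rw [map_add_left_eq_self volume x] at this
    simpa using this.symm
  simp_rw [step1]
  rw [lintegral_withDensity_eq_lintegral_mul _ (measurable_gaussianPDF m1 v1)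
    (Measurable.lintegral_prod_right (f := fun x w => gaussianPDF m2 v2 (w - x)) hmeas2)]
  simp only [Pi.mul_apply]
  have swap : ∫⁻ x, gaussianPDF m1 v1 x * ∫⁻ w in s, gaussianPDF m2 v2 (w - x)
      = ∫⁻ w in s, ∫⁻ x, gaussianPDF m1 v1 x * gaussianPDF m2 v2 (w - x) := by
    have hpush : ∀ x : ℝ, gaussianPDF m1 v1 x * ∫⁻ w in s, gaussianPDF m2 v2 (w - x)
        = ∫⁻ w in s, gaussianPDF m1 v1 x * gaussianPDF m2 v2 (w - x) := fun x =>
      (lintegral_const_mul _ ((measurable_gaussianPDF m2 v2).comp (measurable_sub_const x))).symm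
    simp_rw [hpush]
    rw [lintegral_lintegral_swap]
    exact (((measurable_gaussianPDF m1 v1).comp measurable_fst).mul
      ((measurable_gaussianPDF m2 v2).comp (measurable_snd.sub measurable_fst))).aemeasurable
  rw [swap]
  refine setLIntegral_congr_fun hs (fun w _ => ?_)
  have hvcond : v1 * v2 / (v1 + v2) ≠ 0 := by
    simp [div_eq_zero_iff, h1, h2, h12]
  calc ∫⁻ x, gaussianPDF m1 v1 x * gaussianPDF m2 v2 (w - x)
      = ∫⁻ x, gaussianPDF (m1 + m2) (v1 + v2) w
          * gaussianPDF ((v2 * m1 + v1 * (w - m2)) / (v1 + v2)) (v1 * v2 / (v1 + v2)) x := by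
        congr 1
        ext x
        simp only [gaussianPDF]
        rw [← ENNReal.ofReal_mul (gaussianPDFReal_nonneg _ _ _),
          ← ENNReal.ofReal_mul (gaussianPDFReal_nonneg _ _ _),
          gaussianPDFReal_conv m1 m2 v1 v2 h1 h2 w x]
    _ = gaussianPDF (m1 + m2) (v1 + v2) w := by
        rw [lintegral_const_mul _ (measurable_gaussianPDF _ _),
          lintegral_gaussianPDF_eq_one _ hvcond, mul_one]

/-- Image of a Gaussian under an affine map of a pair of independent Gaussians. -/
lemma gaussianReal_pair_affine (m1 m2 : ℝ) (v1 v2 : ℝ≥0) (a b k : ℝ) :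
    Measure.map (fun p : ℝ × ℝ => a * p.1 + b * p.2 + k)
        ((gaussianReal m1 v1).prod (gaussianReal m2 v2))
      = gaussianReal (a * m1 + b * m2 + k)
          (NNReal.mk (a ^ 2) (sq_nonneg a) * v1 + NNReal.mk (b ^ 2) (sq_nonneg b) * v2) := by
  have hcomp : (fun p : ℝ × ℝ => a * p.1 + b * p.2 + k)
      = (fun y => y + k) ∘ (fun p : ℝ × ℝ => p.1 + p.2)
        ∘ Prod.map (fun x => a * x) (fun x => b * x) := rfl
  rw [hcomp, ← Measure.map_map (measurable_add_const k)
      (measurable_add.comp ((measurable_const_mul a).prodMap (measurable_const_mul b))),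
    ← Measure.map_map measurable_add ((measurable_const_mul a).prodMap (measurable_const_mul b)),
    ← Measure.map_prod_map _ _ (measurable_const_mul a) (measurable_const_mul b),
    gaussianReal_map_const_mul, gaussianReal_map_const_mul, gaussianReal_conv,
    gaussianReal_map_add_const]

/-- Coordinatewise image of a product measure. -/
lemma map_pi_of_maps {ι : Type*} [Fintype ι] {α β : Type*} [MeasurableSpace α]
    [MeasurableSpace β] (μ : ι → Measure α) [∀ i, IsProbabilityMeasure (μ i)]
    (f : ι → α → β) (hf : ∀ i, Measurable (f i)) :
    Measure.map (fun x i => f i (x i)) (Measure.pi μ)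
      = Measure.pi fun i => (μ i).map (f i) := by
  haveI : ∀ i, IsProbabilityMeasure ((μ i).map (f i)) := fun i =>
    Measure.isProbabilityMeasure_map (hf i).aemeasurable
  refine (Measure.pi_eq fun s hs => ?_).symm
  rw [Measure.map_apply (show Measurable fun (x : ι → α) i => f i (x i) from
    measurable_pi_lambda _ fun i => (hf i).comp (measurable_pi_apply i))
    (MeasurableSet.univ_pi hs)]
  have : (fun (x : ι → α) i => f i (x i)) ⁻¹' Set.pi Set.univ s
      = Set.pi Set.univ fun i => f i ⁻¹' s i := by
    ext x; simp
  rw [this, Measure.pi_pi]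
  exact Finset.prod_congr rfl fun i _ => (Measure.map_apply (hf i) (hs i)).symm

/-- One-dimensional version of the main theorem. -/
lemma oned (m c σx γ σt v : ℝ) (hσx : 0 ≤ σx) (hv : v = γ ^ 2 * σx ^ 2 + σt ^ 2)
    (hvpos : 0 < v) :
    Measure.map (fun q : (ℝ × ℝ) × (ℝ × ℝ) =>
        -(γ * q.1.1 + σt * q.2.1 - γ * m) / v + (γ * q.1.2 + σt * q.2.2 + c - γ * m) / v)
      (((gaussianReal m ((σx ^ 2).toNNReal)).prod (gaussianReal m ((σx ^ 2).toNNReal))).prod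
        ((gaussianReal 0 1).prod (gaussianReal 0 1)))
    = gaussianReal (c / v) ((2 / v).toNNReal) := by
  have hvne : v ≠ 0 := ne_of_gt hvpos
  set f1 : ℝ × ℝ → ℝ := fun p => (-γ / v) * p.1 + (γ / v) * p.2 + c / v with hf1
  set f2 : ℝ × ℝ → ℝ := fun p => (-σt / v) * p.1 + (σt / v) * p.2 + 0 with hf2
  have mf1 : Measurable f1 := by fun_prop
  have mf2 : Measurable f2 := by fun_prop
  have hcomp : (fun q : (ℝ × ℝ) × (ℝ × ℝ) =>
        -(γ * q.1.1 + σt * q.2.1 - γ * m) / v + (γ * q.1.2 + σt * q.2.2 + c - γ * m) / v)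
      = (fun r : ℝ × ℝ => r.1 + r.2) ∘ Prod.map f1 f2 := by
    funext q
    simp only [Function.comp_apply, Prod.map_fst, Prod.map_snd, hf1, hf2]
    field_simp
    ring
  rw [hcomp, ← Measure.map_map measurable_add (mf1.prodMap mf2),
    ← Measure.map_prod_map _ _ mf1 mf2, gaussianReal_pair_affine, gaussianReal_pair_affine,
    gaussianReal_conv]
  congr 1
  · field_simp
    ring
  · apply NNReal.coe_injective
    push_cast [Real.coe_toNNReal _ (sq_nonneg σx),
      Real.coe_toNNReal _ (le_of_lt (by positivity : (0:ℝ) < 2 / v))]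
    subst hv
    field_simp
    ring

end ScoreDiffAux

/-- Theorem 1, conclusion 3, natural–adversarial pair, per timestep: the difference
between the perturbation score of a natural sample and that of an independent ε-shifted
adversarial sample has independent coordinates distributed `N(ε_i/v, 2ζ²)`
with `ζ² = 1/v`, `v = γ²σx² + σt²`. -/
theorem score_difference_adversarial_pair_law (d : ℕ) (hd : 1 ≤ d) (μ : Fin d → ℝ)
    (σx : ℝ) (hσx : 0 ≤ σx) (γ σt : ℝ) (v : ℝ) (hv : v = γ ^ 2 * σx ^ 2 + σt ^ 2)
    (hvpos : 0 < v) (ε : Fin d → ℝ) :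
    Measure.map
      (fun p : ((Fin d → ℝ) × (Fin d → ℝ)) × ((Fin d → ℝ) × (Fin d → ℝ)) =>
        fun i => -(γ * p.1.1 i + σt * p.2.1 i - γ * μ i) / v
          + (γ * p.1.2 i + σt * p.2.2 i + ε i - γ * μ i) / v)
      (((Measure.pi fun i => gaussianReal (μ i) ((σx ^ 2).toNNReal)).prod
          (Measure.pi fun i => gaussianReal (μ i) ((σx ^ 2).toNNReal))).prod
        ((Measure.pi fun _ => gaussianReal 0 1).prod
          (Measure.pi fun _ => gaussianReal 0 1)))
    = Measure.pi fun i => gaussianReal (ε i / v) ((2 / v).toNNReal) := by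
  set Gx : Fin d → Measure ℝ := fun i => gaussianReal (μ i) ((σx ^ 2).toNNReal) with hGx
  set ν : Fin d → Measure ℝ := fun _ => gaussianReal 0 1 with hν
  set g : Fin d → (ℝ × ℝ) × (ℝ × ℝ) → ℝ := fun i q =>
    -(γ * q.1.1 + σt * q.2.1 - γ * μ i) / v + (γ * q.1.2 + σt * q.2.2 + ε i - γ * μ i) / v
    with hg
  have hgmeas : ∀ i, Measurable (g i) := fun i => by fun_prop
  have mp1 : MeasurePreserving (MeasurableEquiv.arrowProdEquivProdArrow ℝ ℝ (Fin d)).symm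
      ((Measure.pi Gx).prod (Measure.pi Gx)) (Measure.pi fun i => (Gx i).prod (Gx i)) :=
    (measurePreserving_arrowProdEquivProdArrow ℝ ℝ (Fin d) Gx Gx).symm _
  have mp2 : MeasurePreserving (MeasurableEquiv.arrowProdEquivProdArrow ℝ ℝ (Fin d)).symm
      ((Measure.pi ν).prod (Measure.pi ν)) (Measure.pi fun i => (ν i).prod (ν i)) :=
    (measurePreserving_arrowProdEquivProdArrow ℝ ℝ (Fin d) ν ν).symm _
  have mp3 : MeasurePreserving
      (MeasurableEquiv.arrowProdEquivProdArrow (ℝ × ℝ) (ℝ × ℝ) (Fin d)).symm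
      ((Measure.pi fun i => (Gx i).prod (Gx i)).prod (Measure.pi fun i => (ν i).prod (ν i)))
      (Measure.pi fun i => ((Gx i).prod (Gx i)).prod ((ν i).prod (ν i))) :=
    (measurePreserving_arrowProdEquivProdArrow (ℝ × ℝ) (ℝ × ℝ) (Fin d) _ _).symm _
  have mpE := mp3.comp (mp1.prod mp2)
  have hcomp : (fun p : ((Fin d → ℝ) × (Fin d → ℝ)) × ((Fin d → ℝ) × (Fin d → ℝ)) =>
        fun i => -(γ * p.1.1 i + σt * p.2.1 i - γ * μ i) / v
          + (γ * p.1.2 i + σt * p.2.2 i + ε i - γ * μ i) / v)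
      = (fun (x : Fin d → (ℝ × ℝ) × (ℝ × ℝ)) i => g i (x i))
        ∘ ((MeasurableEquiv.arrowProdEquivProdArrow (ℝ × ℝ) (ℝ × ℝ) (Fin d)).symm
          ∘ Prod.map (MeasurableEquiv.arrowProdEquivProdArrow ℝ ℝ (Fin d)).symm
            (MeasurableEquiv.arrowProdEquivProdArrow ℝ ℝ (Fin d)).symm) := rfl
  rw [hcomp, ← Measure.map_map (show Measurable fun (x : Fin d → (ℝ × ℝ) × (ℝ × ℝ)) i => g i (x i)
      from measurable_pi_lambda _ fun i => (hgmeas i).comp (measurable_pi_apply i))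
      mpE.measurable, mpE.map_eq,
    ScoreDiffAux.map_pi_of_maps _ g hgmeas]
  refine congrArg Measure.pi (funext fun i => ?_)
  exact ScoreDiffAux.oned (μ i) (ε i) σx γ σt v hσx hv hvpos
end

section
/- (Theorem 1, conclusion 1, EPS law) Fix d ≥ 1, T > 0, μ : Fin d → ℝ, σx ≥ 0, and measurable schedules γ, σ : ℝ → ℝ with v t := (γ t)²σx² + (σ t)² > 0 for t ∈ [0,T], and with t ↦ γ t / v t and t ↦ σ t / v t integrable on [0,T]. Let X₀ and Z be independent with laws Measure.pi (fun i => gaussianReal (μ i) (σx²)) and Measure.pi (fun i => gaussianReal 0 1). Define the expected perturbation score S = (1/T)·∫₀^T (fun i => −(γ t * X₀ i + σ t * Z i − γ t * μ i)/(v t)) dt (Bochner integral in ℝ^d). Then the law of S is Measure.pi (fun i => gaussianReal 0 (a²σx² + b²)), where a = (1/T)∫₀^T γ t / (v t) dt and b = (1/T)∫₀^T σ t / (v t) dt; in particular the EPS of a natural sample is a centered Gaussian vector. -/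
set_option maxHeartbeats 1000000

open MeasureTheory ProbabilityTheory Real
open scoped ENNReal NNReal

lemma gauss_pdf_mul (m₁ m₂ : ℝ) (v₁ v₂ : ℝ≥0) (hv₁ : v₁ ≠ 0) (hv₂ : v₂ ≠ 0) (z x : ℝ) :
    gaussianPDFReal m₁ v₁ x * gaussianPDFReal (x + m₂) v₂ z
      = ((√(2*π*v₁))⁻¹ * (√(2*π*v₂))⁻¹ * rexp (-(z - m₁ - m₂)^2/(2*((v₁:ℝ)+v₂))))
        * rexp (-((((v₁:ℝ)+v₂)/(2*v₁*v₂)) * (x - (m₁ + v₁*(z-m₁-m₂)/((v₁:ℝ)+v₂)))^2)) := by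
  have hp : (0:ℝ) < v₁ := lt_of_le_of_ne v₁.coe_nonneg (by exact_mod_cast (Ne.symm hv₁))
  have hq : (0:ℝ) < v₂ := lt_of_le_of_ne v₂.coe_nonneg (by exact_mod_cast (Ne.symm hv₂))
  have hpq : (0:ℝ) < (v₁:ℝ) + v₂ := by linarith
  simp only [gaussianPDFReal]
  have h1 : ((√(2*π*(v₁:ℝ)))⁻¹ * rexp (-(x - m₁)^2 / (2*v₁))) * ((√(2*π*(v₂:ℝ)))⁻¹ * rexp (-(z - (x+m₂))^2 / (2*v₂)))
      = ((√(2*π*(v₁:ℝ)))⁻¹ * (√(2*π*(v₂:ℝ)))⁻¹) * rexp (-(x - m₁)^2 / (2*v₁) + -(z - (x+m₂))^2 / (2*v₂)) := by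
    rw [Real.exp_add]; ring
  have h2 : ((√(2*π*(v₁:ℝ)))⁻¹ * (√(2*π*(v₂:ℝ)))⁻¹ * rexp (-(z - m₁ - m₂)^2/(2*((v₁:ℝ)+v₂))))
        * rexp (-((((v₁:ℝ)+v₂)/(2*v₁*v₂)) * (x - (m₁ + v₁*(z-m₁-m₂)/((v₁:ℝ)+v₂)))^2))
      = ((√(2*π*(v₁:ℝ)))⁻¹ * (√(2*π*(v₂:ℝ)))⁻¹) * rexp (-(z - m₁ - m₂)^2/(2*((v₁:ℝ)+v₂))
          + -((((v₁:ℝ)+v₂)/(2*v₁*v₂)) * (x - (m₁ + v₁*(z-m₁-m₂)/((v₁:ℝ)+v₂)))^2)) := by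
    rw [Real.exp_add]; ring
  rw [h1, h2]
  congr 2
  field_simp
  ring

lemma gauss_conv_integrable (m₁ m₂ : ℝ) (v₁ v₂ : ℝ≥0) (hv₁ : v₁ ≠ 0) (hv₂ : v₂ ≠ 0) (z : ℝ) :
    Integrable (fun x => gaussianPDFReal m₁ v₁ x * gaussianPDFReal (x + m₂) v₂ z) := by
  have hp : (0:ℝ) < v₁ := lt_of_le_of_ne v₁.coe_nonneg (by exact_mod_cast (Ne.symm hv₁))
  have hq : (0:ℝ) < v₂ := lt_of_le_of_ne v₂.coe_nonneg (by exact_mod_cast (Ne.symm hv₂))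
  have hα : (0:ℝ) < ((v₁:ℝ)+v₂)/(2*v₁*v₂) := by positivity
  have hfun : (fun x => gaussianPDFReal m₁ v₁ x * gaussianPDFReal (x + m₂) v₂ z)
      = fun x => ((√(2*π*v₁))⁻¹ * (√(2*π*v₂))⁻¹ * rexp (-(z - m₁ - m₂)^2/(2*((v₁:ℝ)+v₂))))
        * rexp (-((((v₁:ℝ)+v₂)/(2*v₁*v₂)) * (x - (m₁ + v₁*(z-m₁-m₂)/((v₁:ℝ)+v₂)))^2)) :=
    funext (gauss_pdf_mul m₁ m₂ v₁ v₂ hv₁ hv₂ z)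
  rw [hfun]
  have hbase : Integrable (fun u : ℝ => rexp (-(((v₁:ℝ)+v₂)/(2*v₁*v₂)) * u^2)) :=
    integrable_exp_neg_mul_sq hα
  have := (hbase.comp_sub_right (m₁ + v₁*(z-m₁-m₂)/((v₁:ℝ)+v₂))).const_mul
    ((√(2*π*(v₁:ℝ)))⁻¹ * (√(2*π*(v₂:ℝ)))⁻¹ * rexp (-(z - m₁ - m₂)^2/(2*((v₁:ℝ)+v₂))))
  convert this using 2 with x
  ring_nf

lemma gauss_conv_integral (m₁ m₂ : ℝ) (v₁ v₂ : ℝ≥0) (hv₁ : v₁ ≠ 0) (hv₂ : v₂ ≠ 0) (z : ℝ) :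
    ∫ x, gaussianPDFReal m₁ v₁ x * gaussianPDFReal (x + m₂) v₂ z
      = gaussianPDFReal (m₁ + m₂) (v₁ + v₂) z := by
  have hp : (0:ℝ) < v₁ := lt_of_le_of_ne v₁.coe_nonneg (by exact_mod_cast (Ne.symm hv₁))
  have hq : (0:ℝ) < v₂ := lt_of_le_of_ne v₂.coe_nonneg (by exact_mod_cast (Ne.symm hv₂))
  have hpq : (0:ℝ) < (v₁:ℝ) + v₂ := by linarith
  have hα : (0:ℝ) < ((v₁:ℝ)+v₂)/(2*v₁*v₂) := by positivity
  have hfun : (fun x => gaussianPDFReal m₁ v₁ x * gaussianPDFReal (x + m₂) v₂ z)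
      = fun x => ((√(2*π*v₁))⁻¹ * (√(2*π*v₂))⁻¹ * rexp (-(z - m₁ - m₂)^2/(2*((v₁:ℝ)+v₂))))
        * rexp (-((((v₁:ℝ)+v₂)/(2*v₁*v₂)) * (x - (m₁ + v₁*(z-m₁-m₂)/((v₁:ℝ)+v₂)))^2)) :=
    funext (gauss_pdf_mul m₁ m₂ v₁ v₂ hv₁ hv₂ z)
  rw [hfun, integral_const_mul]
  have hre : (fun x : ℝ => rexp (-((((v₁:ℝ)+v₂)/(2*v₁*v₂)) * (x - (m₁ + v₁*(z-m₁-m₂)/((v₁:ℝ)+v₂)))^2)))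
      = (fun x : ℝ => (fun u => rexp (-(((v₁:ℝ)+v₂)/(2*v₁*v₂)) * u^2)) (x - (m₁ + v₁*(z-m₁-m₂)/((v₁:ℝ)+v₂)))) := by
    funext x; ring_nf
  rw [hre, integral_sub_right_eq_self (μ := volume) (fun u => rexp (-(((v₁:ℝ)+v₂)/(2*v₁*v₂)) * u^2)) _,
    integral_gaussian]
  simp only [gaussianPDFReal]
  have hy : z - (m₁ + m₂) = z - m₁ - m₂ := by ring
  rw [hy]
  have hc : (√(2*π*(v₁:ℝ)))⁻¹ * (√(2*π*(v₂:ℝ)))⁻¹ * √(π / (((v₁:ℝ)+v₂)/(2*v₁*v₂)))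
      = (√(2*π*((v₁:ℝ)+v₂)))⁻¹ := by
    rw [← Real.sqrt_inv (2*π*(v₁:ℝ)), ← Real.sqrt_inv (2*π*(v₂:ℝ)),
      ← Real.sqrt_mul (by positivity), ← Real.sqrt_mul (by positivity), ← Real.sqrt_inv]
    congr 1
    field_simp
  push_cast
  rw [← hc]
  ring

lemma gauss_conv_lintegral (m₁ m₂ : ℝ) (v₁ v₂ : ℝ≥0) (hv₁ : v₁ ≠ 0) (hv₂ : v₂ ≠ 0) (z : ℝ) :
    ∫⁻ x, gaussianPDF m₁ v₁ x * gaussianPDF (x + m₂) v₂ z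
      = gaussianPDF (m₁ + m₂) (v₁ + v₂) z := by
  simp only [gaussianPDF]
  have h1 : ∀ x : ℝ, ENNReal.ofReal (gaussianPDFReal m₁ v₁ x) * ENNReal.ofReal (gaussianPDFReal (x + m₂) v₂ z)
      = ENNReal.ofReal (gaussianPDFReal m₁ v₁ x * gaussianPDFReal (x + m₂) v₂ z) := fun x =>
    (ENNReal.ofReal_mul (gaussianPDFReal_nonneg _ _ _)).symm
  simp only [h1]
  rw [← ofReal_integral_eq_lintegral_ofReal (gauss_conv_integrable m₁ m₂ v₁ v₂ hv₁ hv₂ z)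
    (ae_of_all _ fun x => mul_nonneg (gaussianPDFReal_nonneg _ _ _) (gaussianPDFReal_nonneg _ _ _)),
    gauss_conv_integral m₁ m₂ v₁ v₂ hv₁ hv₂ z]

lemma gaussianReal_conv (m₁ m₂ : ℝ) (v₁ v₂ : ℝ≥0) :
    Measure.map (fun p : ℝ × ℝ => p.1 + p.2) ((gaussianReal m₁ v₁).prod (gaussianReal m₂ v₂))
      = gaussianReal (m₁ + m₂) (v₁ + v₂) := by
  by_cases hv₁ : v₁ = 0
  · subst hv₁
    rw [gaussianReal_zero_var, Measure.dirac_prod,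
      Measure.map_map measurable_add measurable_prodMk_left]
    rw [show ((fun p : ℝ × ℝ => p.1 + p.2) ∘ Prod.mk m₁) = (fun x => m₁ + x) from rfl,
      gaussianReal_map_const_add, add_comm m₂ m₁, zero_add]
  by_cases hv₂ : v₂ = 0
  · subst hv₂
    rw [gaussianReal_zero_var, Measure.prod_dirac,
      Measure.map_map measurable_add measurable_prodMk_right]
    rw [show ((fun p : ℝ × ℝ => p.1 + p.2) ∘ (fun x => (x, m₂))) = (fun x => x + m₂) from rfl,
      gaussianReal_map_add_const, add_zero]
  have hv : v₁ + v₂ ≠ 0 := by simp [hv₁]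
  ext s hs
  rw [Measure.map_apply measurable_add hs,
    Measure.prod_apply (measurable_add hs)]
  have hslice : ∀ x : ℝ, (gaussianReal m₂ v₂) (Prod.mk x ⁻¹' ((fun p : ℝ × ℝ => p.1 + p.2) ⁻¹' s))
      = ∫⁻ z in s, gaussianPDF (x + m₂) v₂ z := by
    intro x
    have : Prod.mk x ⁻¹' ((fun p : ℝ × ℝ => p.1 + p.2) ⁻¹' s) = (fun z => x + z) ⁻¹' s := rfl
    rw [this, ← Measure.map_apply (measurable_const_add x) hs,
      gaussianReal_map_const_add, gaussianReal_of_var_ne_zero _ hv₂,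
      withDensity_apply _ hs]
    rw [add_comm m₂ x]
  have hmeas : Measurable (fun q : ℝ × ℝ => gaussianPDF m₁ v₁ q.1 * gaussianPDF (q.1 + m₂) v₂ q.2) := by
    refine Measurable.mul ((measurable_gaussianPDF m₁ v₁).comp measurable_fst) ?_
    exact Measurable.ennreal_ofReal
      ((((((measurable_snd.sub (measurable_fst.add_const m₂)).pow_const 2).neg.div_const
        _).exp).const_mul _))
  have hmeas2 : Measurable (fun q : ℝ × ℝ => gaussianPDF (q.1 + m₂) v₂ q.2) :=
    Measurable.ennreal_ofReal
      ((((((measurable_snd.sub (measurable_fst.add_const m₂)).pow_const 2).neg.div_const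
        _).exp).const_mul _))
  simp only [hslice]
  rw [gaussianReal_of_var_ne_zero _ hv₁,
    lintegral_withDensity_eq_lintegral_mul _ (measurable_gaussianPDF _ _)
      (Measurable.lintegral_prod_right (f := fun x z => gaussianPDF (x + m₂) v₂ z) hmeas2)]
  have hpull : ∀ x : ℝ, (gaussianPDF m₁ v₁ * fun x => ∫⁻ z in s, gaussianPDF (x + m₂) v₂ z) x
      = ∫⁻ z in s, gaussianPDF m₁ v₁ x * gaussianPDF (x + m₂) v₂ z := by
    intro x
    simp only [Pi.mul_apply]
    rw [lintegral_const_mul _ (by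
      exact Measurable.ennreal_ofReal
        ((((measurable_id.sub_const _).pow_const 2).neg.div_const _).exp.const_mul _))]
  simp only [hpull]
  rw [lintegral_lintegral_swap hmeas.aemeasurable]
  have hptw : ∀ z : ℝ, (∫⁻ x, gaussianPDF m₁ v₁ x * gaussianPDF (x + m₂) v₂ z)
      = gaussianPDF (m₁ + m₂) (v₁ + v₂) z := fun z =>
    gauss_conv_lintegral m₁ m₂ v₁ v₂ hv₁ hv₂ z
  simp only [hptw]
  rw [gaussianReal_of_var_ne_zero _ hv, withDensity_apply _ hs]

lemma coord_law (a b m : ℝ) (V : ℝ≥0) :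
    Measure.map (fun q : ℝ × ℝ => -(a * (q.1 - m) + b * q.2))
      ((gaussianReal m V).prod (gaussianReal 0 1))
    = gaussianReal 0 (⟨a^2, sq_nonneg a⟩ * V + ⟨b^2, sq_nonneg b⟩ * 1) := by
  have hfg : (fun q : ℝ × ℝ => -(a * (q.1 - m) + b * q.2))
      = (fun p : ℝ × ℝ => p.1 + p.2) ∘ (Prod.map (fun x => (-a) * x + a * m) (fun z => (-b) * z)) := by
    funext q; simp [Prod.map]; ring
  rw [hfg, ← Measure.map_map measurable_add (((measurable_const_mul (-a)).add_const (a*m)).prodMap (measurable_const_mul (-b))),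
    ← Measure.map_prod_map _ _ ((measurable_const_mul (-a)).add_const (a*m)) (measurable_const_mul (-b))]
  have h1 : Measure.map (fun x => (-a) * x + a * m) (gaussianReal m V)
      = gaussianReal 0 (⟨a^2, sq_nonneg a⟩ * V) := by
    have : (fun x => (-a) * x + a * m) = (fun y => y + a * m) ∘ (fun x => (-a) * x) := rfl
    rw [this, ← Measure.map_map (measurable_add_const (a*m)) (measurable_const_mul (-a))]
    rw [show (fun x => (-a) * x) = ((-a) * ·) from rfl, gaussianReal_map_const_mul,
      show ((· + a * m)) = (fun y => y + a * m) from rfl, gaussianReal_map_add_const]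
    congr 1
    · ring
    · congr 1; ext; simp [neg_pow]; rfl
  have h2 : Measure.map (fun z => (-b) * z) (gaussianReal 0 1)
      = gaussianReal 0 (⟨b^2, sq_nonneg b⟩ * 1) := by
    rw [show (fun z => (-b) * z) = ((-b) * ·) from rfl, gaussianReal_map_const_mul]
    congr 1
    · ring
    · congr 1; ext; simp [neg_pow]; rfl
  rw [h1, h2, gaussianReal_conv, add_zero]

/-- Theorem 1, conclusion 1, EPS law: the expected perturbation score
`S = (1/T)·∫₀ᵀ score_t dt` of a natural sample `X₀ ~ N(μ, σx²·I)` with shared noise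
`Z ~ N(0, I)` is a centered Gaussian vector with per-coordinate variance `a²σx² + b²`,
where `a = (1/T)∫₀ᵀ γ t / v t dt` and `b = (1/T)∫₀ᵀ σ t / v t dt`. -/
theorem eps_natural_law (d : ℕ) (hd : 1 ≤ d) (T : ℝ) (hT : 0 < T) (μ : Fin d → ℝ)
    (σx : ℝ) (hσx : 0 ≤ σx) (γ σ : ℝ → ℝ) (hγ : Measurable γ) (hσ : Measurable σ)
    (v : ℝ → ℝ) (hv : ∀ t, v t = (γ t) ^ 2 * σx ^ 2 + (σ t) ^ 2)
    (hvpos : ∀ t ∈ Set.Icc (0 : ℝ) T, 0 < v t)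
    (hint1 : IntervalIntegrable (fun t => γ t / v t) volume 0 T)
    (hint2 : IntervalIntegrable (fun t => σ t / v t) volume 0 T) :
    Measure.map
      (fun p : (Fin d → ℝ) × (Fin d → ℝ) =>
        (1 / T) • ∫ t in (0 : ℝ)..T,
          (fun i => -(γ t * p.1 i + σ t * p.2 i - γ t * μ i) / v t))
      ((Measure.pi fun i => gaussianReal (μ i) ((σx ^ 2).toNNReal)).prod
        (Measure.pi fun _ => gaussianReal 0 1))
    = Measure.pi fun _ => gaussianReal 0
        ((((1 / T) * ∫ t in (0 : ℝ)..T, γ t / v t) ^ 2 * σx ^ 2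
          + ((1 / T) * ∫ t in (0 : ℝ)..T, σ t / v t) ^ 2).toNNReal) := by
  set a : ℝ := (1 / T) * ∫ t in (0 : ℝ)..T, γ t / v t with ha
  set b : ℝ := (1 / T) * ∫ t in (0 : ℝ)..T, σ t / v t with hb
  -- Step 1: simplify the map
  have key : (fun p : (Fin d → ℝ) × (Fin d → ℝ) =>
        (1 / T) • ∫ t in (0 : ℝ)..T,
          (fun i => -(γ t * p.1 i + σ t * p.2 i - γ t * μ i) / v t))
      = fun p => fun i => -(a * (p.1 i - μ i) + b * p.2 i) := by
    funext p
    have hF : ∀ t : ℝ, (fun i => -(γ t * p.1 i + σ t * p.2 i - γ t * μ i) / v t)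
        = (γ t / v t) • (fun i => -(p.1 i - μ i)) + (σ t / v t) • (fun i => -(p.2 i)) := by
      intro t
      funext i
      simp only [Pi.add_apply, Pi.smul_apply, smul_eq_mul]
      rw [div_mul_eq_mul_div, div_mul_eq_mul_div, ← add_div]
      congr 1
      ring
    rw [intervalIntegral.integral_congr (fun t _ => hF t),
      intervalIntegral.integral_add
        ⟨(hint1.1.smul_const _), (hint1.2.smul_const _)⟩
        ⟨(hint2.1.smul_const _), (hint2.2.smul_const _)⟩,
      intervalIntegral.integral_smul_const, intervalIntegral.integral_smul_const]
    funext i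
    simp only [Pi.smul_apply, Pi.add_apply, smul_eq_mul]
    rw [ha, hb]
    ring
  rw [key]
  -- Step 2: measure computation
  set W : ℝ≥0 := ⟨a^2, sq_nonneg a⟩ * (σx^2).toNNReal + ⟨b^2, sq_nonneg b⟩ * 1 with hW
  have hG : Measurable (fun p : (Fin d → ℝ) × (Fin d → ℝ) =>
      fun i => -(a * (p.1 i - μ i) + b * p.2 i)) := by
    refine measurable_pi_lambda _ fun i => ?_
    have : Measurable fun p : (Fin d → ℝ) × (Fin d → ℝ) => -(a * (p.1 i - μ i) + b * p.2 i) := by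
      fun_prop
    exact this
  have hprod := (measurePreserving_arrowProdEquivProdArrow ℝ ℝ (Fin d)
    (fun i => gaussianReal (μ i) ((σx ^ 2).toNNReal)) (fun _ => gaussianReal 0 1)).map_eq
  rw [← hprod, Measure.map_map hG (MeasurableEquiv.arrowProdEquivProdArrow ℝ ℝ (Fin d)).measurable]
  have hcomp : ((fun p : (Fin d → ℝ) × (Fin d → ℝ) => fun i => -(a * (p.1 i - μ i) + b * p.2 i))
      ∘ (MeasurableEquiv.arrowProdEquivProdArrow ℝ ℝ (Fin d)))
      = fun (g : Fin d → ℝ × ℝ) => fun i => (fun q : ℝ × ℝ => -(a * (q.1 - μ i) + b * q.2)) (g i) := rfl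
  rw [hcomp]
  have hpi := (measurePreserving_pi
    (fun i => (gaussianReal (μ i) ((σx ^ 2).toNNReal)).prod (gaussianReal 0 1))
    (fun _ : Fin d => gaussianReal 0 W)
    (fun i => ⟨by
      have : Measurable fun q : ℝ × ℝ => -(a * (q.1 - μ i) + b * q.2) := by fun_prop
      exact this, coord_law a b (μ i) ((σx^2).toNNReal)⟩)).map_eq
  rw [hpi]
  congr 1
  funext i
  congr 1
  rw [hW, ← NNReal.coe_inj]
  push_cast
  change (a^2 * ((σx^2).toNNReal : ℝ)) + b^2 * 1 = _
  rw [Real.coe_toNNReal _ (by positivity), Real.coe_toNNReal _ (by positivity)]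
  ring
end

section
/- (The natural cross-term dominates the adversarial cross-term) Fix d ≥ 1, σ > 0, τ ≥ 0 and m : Fin d → ℝ with m ≠ 0. Then ∫ Real.exp(−(∑ i, (x i)²)/(2σ²)) d(Measure.pi fun i => gaussianReal (m i) τ²)(x) < ∫ Real.exp(−(∑ i, (x i)²)/(2σ²)) d(Measure.pi fun i => gaussianReal 0 τ²)(x); i.e., the expected Gaussian kernel between EPSs is strictly smaller when the difference of EPSs has nonzero mean (natural vs. adversarial pair) than when it has mean zero (natural vs. natural pair), so the EPS-based MMD between natural and adversarial samples exceeds that among natural samples in expectation. -/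
open MeasureTheory ProbabilityTheory NNReal ENNReal

lemma gauss_translate (a c e : ℝ) (ha : 0 < a) :
    ∫ x : ℝ, Real.exp (-(a * (x + c) ^ 2) - e)
      = Real.sqrt (Real.pi / a) * Real.exp (-e) := by
  have h : ∀ x : ℝ, Real.exp (-(a * (x + c) ^ 2) - e)
      = Real.exp (-e) * Real.exp (-(a * (x + c) ^ 2)) := fun x => by
    rw [← Real.exp_add]; ring_nf
  simp_rw [h]
  rw [integral_const_mul,
    integral_add_right_eq_self (fun x : ℝ => Real.exp (-(a * x ^ 2))) c]
  simp_rw [← neg_mul]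
  rw [integral_gaussian]
  ring

lemma gauss1D (σ : ℝ) (hσ : 0 < σ) (v : ℝ≥0) (μ : ℝ) :
    ∫ x, Real.exp (-x ^ 2 / (2 * σ ^ 2)) ∂gaussianReal μ v
      = σ / Real.sqrt (σ ^ 2 + v) * Real.exp (-μ ^ 2 / (2 * (σ ^ 2 + v))) := by
  by_cases hv : v = 0
  · subst hv
    rw [gaussianReal_zero_var, integral_dirac]
    simp only [NNReal.coe_zero, add_zero]
    rw [Real.sqrt_sq hσ.le, div_self hσ.ne']
    ring
  · have hvpos : (0:ℝ) < v := by positivity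
    have hs : (0:ℝ) < σ ^ 2 + v := by positivity
    rw [gaussianReal_of_var_ne_zero _ hv]
    have hpdf : (gaussianPDF μ v) = fun x => ((gaussianPDFReal μ v x).toNNReal : ℝ≥0∞) := by
      funext x
      rw [gaussianPDF]
      rfl
    rw [hpdf, integral_withDensity_eq_integral_smul
      ((measurable_gaussianPDFReal μ v).real_toNNReal) _]
    simp_rw [NNReal.smul_def, Real.coe_toNNReal _ (gaussianPDFReal_nonneg μ v _), smul_eq_mul,
      gaussianPDFReal]
    -- integrand: (√(2πv))⁻¹ * exp(-(x-μ)²/(2v)) * exp(-x²/(2σ²))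
    set a : ℝ := (σ ^ 2 + v) / (2 * v * σ ^ 2) with ha_def
    have ha : 0 < a := by positivity
    set c : ℝ := -(μ * σ ^ 2) / (σ ^ 2 + v) with hc_def
    set e : ℝ := μ ^ 2 / (2 * (σ ^ 2 + v)) with he_def
    have key : ∀ x : ℝ, (Real.sqrt (2 * Real.pi * v))⁻¹ * Real.exp (-(x - μ) ^ 2 / (2 * v))
        * Real.exp (-x ^ 2 / (2 * σ ^ 2))
        = (Real.sqrt (2 * Real.pi * v))⁻¹ * Real.exp (-(a * (x + c) ^ 2) - e) := by
      intro x
      rw [mul_assoc, ← Real.exp_add]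
      congr 1
      rw [ha_def, hc_def, he_def]
      congr 1
      field_simp
      ring
    simp_rw [key]
    rw [integral_const_mul, gauss_translate _ _ _ ha]
    have hπa : Real.pi / a = (2 * Real.pi * v) * (σ ^ 2 / (σ ^ 2 + v)) := by
      rw [ha_def]; field_simp
    have h2 : Real.sqrt (2 * Real.pi * (v:ℝ)) ≠ 0 := by positivity
    have hconst : (Real.sqrt (2 * Real.pi * (v:ℝ)))⁻¹
        * Real.sqrt (2 * Real.pi * (v:ℝ) * (σ ^ 2 / (σ ^ 2 + (v:ℝ))))
        = σ / Real.sqrt (σ ^ 2 + (v:ℝ)) := by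
      rw [Real.sqrt_mul (by positivity : (0:ℝ) ≤ 2 * Real.pi * (v:ℝ)),
        Real.sqrt_div (sq_nonneg σ), Real.sqrt_sq hσ.le, inv_mul_cancel_left₀ h2]
    rw [hπa, ← mul_assoc, hconst, he_def, neg_div]

lemma pi_gauss (d : ℕ) (σ : ℝ) (hσ : 0 < σ) (v : ℝ≥0) (μ : Fin d → ℝ) :
    ∫ x, Real.exp (-(∑ i, (x i) ^ 2) / (2 * σ ^ 2))
        ∂(Measure.pi fun i => gaussianReal (μ i) v)
      = ∏ i, (σ / Real.sqrt (σ ^ 2 + v) * Real.exp (-(μ i) ^ 2 / (2 * (σ ^ 2 + v)))) := by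
  have h1 : ∀ x : Fin d → ℝ, Real.exp (-(∑ i, (x i) ^ 2) / (2 * σ ^ 2))
      = ∏ i, Real.exp (-(x i) ^ 2 / (2 * σ ^ 2)) := by
    intro x
    rw [← Real.exp_sum]
    congr 1
    rw [← Finset.sum_div, ← Finset.sum_neg_distrib]
  simp_rw [h1]
  letI instMS : ∀ _ : Fin d, MeasureSpace ℝ := fun i => ⟨gaussianReal (μ i) v⟩
  have key := integral_fintype_prod_eq_prod (𝕜 := ℝ) (ι := Fin d) (E := fun _ => ℝ)
    (fun _ x => Real.exp (-x ^ 2 / (2 * σ ^ 2))) (μ := fun i => gaussianReal (μ i) v)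
  have : (volume : Measure (Fin d → ℝ)) = Measure.pi fun i => gaussianReal (μ i) v := rfl
  rw [key]
  exact Finset.prod_congr rfl fun i _ => gauss1D σ hσ v (μ i)

/-- The natural cross-term dominates the adversarial cross-term: the expected Gaussian
kernel between EPSs is strictly smaller when the difference of EPSs has nonzero mean
(natural vs. adversarial pair) than when it has mean zero (natural vs. natural pair). -/
theorem expected_kernel_strict_anti (d : ℕ) (hd : 1 ≤ d) (σ : ℝ) (hσ : 0 < σ) (τ : ℝ)
    (hτ : 0 ≤ τ) (m : Fin d → ℝ) (hm : m ≠ 0) :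
    ∫ x, Real.exp (-(∑ i, (x i) ^ 2) / (2 * σ ^ 2))
        ∂(Measure.pi fun i => gaussianReal (m i) ((τ ^ 2).toNNReal))
    < ∫ x, Real.exp (-(∑ i, (x i) ^ 2) / (2 * σ ^ 2))
        ∂(Measure.pi fun _ : Fin d => gaussianReal 0 ((τ ^ 2).toNNReal)) := by
  rw [pi_gauss d σ hσ ((τ ^ 2).toNNReal) m, pi_gauss d σ hσ ((τ ^ 2).toNNReal) (fun _ => 0)]
  set s : ℝ := σ ^ 2 + (((τ ^ 2).toNNReal : ℝ)) with hs_def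
  have hs : 0 < s := by positivity
  have hC : 0 < (σ / Real.sqrt s) ^ d := by positivity
  rw [Finset.prod_mul_distrib, Finset.prod_mul_distrib, Finset.prod_const, Finset.prod_const,
    Finset.card_univ, Fintype.card_fin]
  norm_num
  have hL : ∏ i : Fin d, Real.exp (-(m i) ^ 2 / (2 * s))
      = Real.exp (∑ i, -(m i) ^ 2 / (2 * s)) := (Real.exp_sum _ _).symm
  rw [hL]
  have hsum : 0 < ∑ i, (m i) ^ 2 := by
    obtain ⟨i, hi⟩ := Function.ne_iff.mp hm
    exact Finset.sum_pos' (fun j _ => sq_nonneg _) ⟨i, Finset.mem_univ i, by simpa [sq] using mul_self_pos.mpr hi⟩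
  have hexp : Real.exp (∑ i, -(m i) ^ 2 / (2 * s)) < 1 := by
    rw [Real.exp_lt_one_iff]
    have : ∑ i, -(m i) ^ 2 / (2 * s) = -(∑ i, (m i) ^ 2) / (2 * s) := by
      rw [← Finset.sum_div, ← Finset.sum_neg_distrib]
    rw [this]
    apply div_neg_of_neg_of_pos (by linarith) (by positivity)
  calc (σ / Real.sqrt s) ^ d * Real.exp (∑ i, -(m i) ^ 2 / (2 * s))
      < (σ / Real.sqrt s) ^ d * 1 := by
        exact mul_lt_mul_of_pos_left hexp hC
    _ = (σ / Real.sqrt s) ^ d := mul_one _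
end
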